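/- Let (Alo, Ahi) be an interval m×n matrix, (blo, bhi) an interval vector in ℝ^m, and (𝒜, β) a quantifier pattern. For every x ∈ ℝ^n: x is an AE-solution of the interval-quantifier system of inequalities A x ≤ b if and only if for every row i, Σ_j Ǎ_{ij} x_j − b̌_i ≤ Σ_j 𝒜^s_{ij} Â_{ij} |x_j| + β^s_i b̂_i. -/
import Mathlib


open Finset

/-- A real matrix `A` lies in the interval matrix `(Alo, Ahi)`. -/
def memIM {m n : ℕ} (Alo Ahi A : Matrix (Fin m) (Fin n) ℝ) : Prop :=
  ∀ i j, Alo i j ≤ A i j ∧ A i j ≤ Ahi i j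

/-- A real vector `b` lies in the interval vector `(blo, bhi)`. -/
def memIV {m : ℕ} (blo bhi b : Fin m → ℝ) : Prop :=
  ∀ i, blo i ≤ b i ∧ b i ≤ bhi i

/-- `x` is an AE-solution of the interval-quantifier system `A x rel b`.
The quantifier pattern is given by `qA : Fin m → Fin n → Bool` and
`qb : Fin m → Bool`, where `true` stands for the label "∀" and `false`
for the label "∃". -/
def AESol {m n : ℕ} (Alo Ahi : Matrix (Fin m) (Fin n) ℝ) (blo bhi : Fin m → ℝ)
    (qA : Fin m → Fin n → Bool) (qb : Fin m → Bool)
    (rel : Fin m → ℝ → ℝ → Prop) (x : Fin n → ℝ) : Prop :=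
  ∀ A' b', memIM Alo Ahi A' → memIV blo bhi b' →
    ∃ A b, memIM Alo Ahi A ∧ memIV blo bhi b ∧
      (∀ i j, qA i j = true → A i j = A' i j) ∧
      (∀ i, qb i = true → b i = b' i) ∧
      ∀ i, rel i (∑ j, A i j * x j) (b i)

/-- Maximizer identity. -/
lemma maxpt (lo hi x : ℝ) :
    (if 0 ≤ x then hi else lo) * x = (lo + hi) / 2 * x + (hi - lo) / 2 * |x| := by
  rcases le_or_gt 0 x with h | h
  · rw [if_pos h, abs_of_nonneg h]; ring
  · rw [if_neg (not_le.2 h), abs_of_neg h]; ring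

/-- Minimizer identity. -/
lemma minpt (lo hi x : ℝ) :
    (if 0 ≤ x then lo else hi) * x = (lo + hi) / 2 * x - (hi - lo) / 2 * |x| := by
  rcases le_or_gt 0 x with h | h
  · rw [if_pos h, abs_of_nonneg h]; ring
  · rw [if_neg (not_le.2 h), abs_of_neg h]; ring

lemma lbpt (lo hi a x : ℝ) (h1 : lo ≤ a) (h2 : a ≤ hi) :
    (lo + hi) / 2 * x - (hi - lo) / 2 * |x| ≤ a * x := by
  rw [← minpt lo hi x]
  rcases le_or_gt 0 x with h | h
  · rw [if_pos h]; exact mul_le_mul_of_nonneg_right h1 h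
  · rw [if_neg (not_le.2 h)]; exact mul_le_mul_of_nonpos_right h2 h.le

lemma ubpt (lo hi a x : ℝ) (h1 : lo ≤ a) (h2 : a ≤ hi) :
    a * x ≤ (lo + hi) / 2 * x + (hi - lo) / 2 * |x| := by
  rw [← maxpt lo hi x]
  rcases le_or_gt 0 x with h | h
  · rw [if_pos h]; exact mul_le_mul_of_nonneg_right h2 h
  · rw [if_neg (not_le.2 h)]; exact mul_le_mul_of_nonpos_right h1 h.le

theorem stmt9 (m n : ℕ) (Alo Ahi : Matrix (Fin m) (Fin n) ℝ) (blo bhi : Fin m → ℝ)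
    (hA : ∀ i j, Alo i j ≤ Ahi i j) (hb : ∀ i, blo i ≤ bhi i)
    (qA : Fin m → Fin n → Bool) (qb : Fin m → Bool) (x : Fin n → ℝ) :
    AESol Alo Ahi blo bhi qA qb (fun _ a b => a ≤ b) x ↔
    ∀ i,
      (∑ j, ((Alo i j + Ahi i j) / 2) * x j - (blo i + bhi i) / 2) ≤
        (∑ j, (if qA i j then (-1 : ℝ) else 1) * ((Ahi i j - Alo i j) / 2) * |x j|) +
          (if qb i then (-1 : ℝ) else 1) * ((bhi i - blo i) / 2) := by
  constructor
  · intro h i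
    obtain ⟨A, b, hAmem, hbmem, hAeq, hbeq, hrel⟩ :=
      h (fun i j => if 0 ≤ x j then Ahi i j else Alo i j) blo
        (fun i j => by dsimp only; split <;> exact ⟨by first | rfl | exact hA i j,
          by first | rfl | exact hA i j⟩)
        (fun i => ⟨le_refl _, hb i⟩)
    have key : ∀ j, ((Alo i j + Ahi i j) / 2) * x j
        - (if qA i j then (-1 : ℝ) else 1) * ((Ahi i j - Alo i j) / 2) * |x j|
        ≤ A i j * x j := by
      intro j
      by_cases hq : qA i j
      · rw [if_pos hq, hAeq i j hq]
        have := maxpt (Alo i j) (Ahi i j) (x j)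
        dsimp only at *
        nlinarith [this]
      · rw [if_neg hq]
        have := lbpt (Alo i j) (Ahi i j) (A i j) (x j) (hAmem i j).1 (hAmem i j).2
        nlinarith [this]
    have hsum : (∑ j, (((Alo i j + Ahi i j) / 2) * x j
        - (if qA i j then (-1 : ℝ) else 1) * ((Ahi i j - Alo i j) / 2) * |x j|))
        ≤ ∑ j, A i j * x j := Finset.sum_le_sum fun j _ => key j
    rw [Finset.sum_sub_distrib] at hsum
    have hbub : b i ≤ (blo i + bhi i) / 2
        + (if qb i then (-1 : ℝ) else 1) * ((bhi i - blo i) / 2) := by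
      by_cases hq : qb i
      · rw [if_pos hq, hbeq i hq]; linarith
      · rw [if_neg hq]; have := (hbmem i).2; linarith
    have := hrel i
    dsimp only at this
    linarith
  · intro h A' b' hA' hb'
    refine ⟨fun i j => if qA i j then A' i j else (if 0 ≤ x j then Alo i j else Ahi i j),
      fun i => if qb i then b' i else bhi i,
      fun i j => by dsimp only; split
                    · exact hA' i j
                    · split <;> exact ⟨by first | rfl | exact hA i j,
                        by first | rfl | exact hA i j⟩,
      fun i => by dsimp only; split
                  · exact hb' i
                  · exact ⟨hb i, le_refl _⟩,
      fun i j hq => by simp [hq],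
      fun i hq => by simp [hq],
      fun i => ?_⟩
    dsimp only
    have key : ∀ j, (if qA i j then A' i j else (if 0 ≤ x j then Alo i j else Ahi i j)) * x j
        ≤ ((Alo i j + Ahi i j) / 2) * x j
          - (if qA i j then (-1 : ℝ) else 1) * ((Ahi i j - Alo i j) / 2) * |x j| := by
      intro j
      by_cases hq : qA i j
      · rw [if_pos hq, if_pos hq]
        have := ubpt (Alo i j) (Ahi i j) (A' i j) (x j) (hA' i j).1 (hA' i j).2
        nlinarith [this]
      · rw [if_neg hq, if_neg hq]
        have := minpt (Alo i j) (Ahi i j) (x j)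
        nlinarith [this]
    have hsum : (∑ j, (if qA i j then A' i j else (if 0 ≤ x j then Alo i j else Ahi i j)) * x j)
        ≤ ∑ j, (((Alo i j + Ahi i j) / 2) * x j
          - (if qA i j then (-1 : ℝ) else 1) * ((Ahi i j - Alo i j) / 2) * |x j|) :=
      Finset.sum_le_sum fun j _ => key j
    rw [Finset.sum_sub_distrib] at hsum
    have hi := h i
    have hblb : (blo i + bhi i) / 2
        + (if qb i then (-1 : ℝ) else 1) * ((bhi i - blo i) / 2)
        ≤ (if qb i then b' i else bhi i) := by
      by_cases hq : qb i
      · rw [if_pos hq, if_pos hq]; have := (hb' i).1; linarith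
      · rw [if_neg hq, if_neg hq]; linarith
    linarith
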